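/- Under majority dynamics on Z², consider the infinite path construction from the enhancement argument: let x₀, x₁, x₂, … be a nearest-neighbor path, and suppose the path decomposes into maximal blocks {x_i, …, x_{i+k}} of consecutive sites, where within each block every site has value 1 at time 0, the first and last sites of each block have no clock ring in [0,t], and between consecutive blocks there is a single 'enhanced' site y whose clock rings before t while all four of y's neighbors' clocks ring only after t, and at least three of y's neighbors have value 1 at time 0. Then at time t, every site x_j with j ≥ j₀ (for j₀ the first enhanced index) has value 1 in η_t, so {x_{j₀}, x_{j₀+1}, …} is an open path at time t. -/

import Mathlib

/-- A site configuration on `ℤ²`: `true` means open (opinion 1). -/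
abbrev Config := (ℤ × ℤ) → Bool

/-- Nearest-neighbor adjacency in `ℤ²`. -/
def Adj (x y : ℤ × ℤ) : Prop := (x.1 - y.1).natAbs + (x.2 - y.2).natAbs = 1

/-- `f 0, …, f n` is a nearest-neighbor path of open sites of `η`. -/
def OpenPath (η : Config) (n : ℕ) (f : ℕ → ℤ × ℤ) : Prop :=
  (∀ i < n, Adj (f i) (f (i + 1))) ∧ ∀ i ≤ n, η (f i) = true

/-- `η` contains an infinite nearest-neighbor connected component of open sites
(equivalently, an infinite self-avoiding open path). -/
def Percolates (η : Config) : Prop :=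
  ∃ f : ℕ → ℤ × ℤ, Function.Injective f ∧ (∀ i, Adj (f i) (f (i + 1))) ∧ ∀ i, η (f i) = true

/-- The origin-type connection: there is an infinite self-avoiding open path starting at `x₀`. -/
def ConnectsToInfinity (η : Config) (x₀ : ℤ × ℤ) : Prop :=
  ∃ f : ℕ → ℤ × ℤ, f 0 = x₀ ∧ Function.Injective f ∧ (∀ i, Adj (f i) (f (i + 1))) ∧
    ∀ i, η (f i) = true

/-- Membership in the rectangle `[a₁, b₁] × [a₂, b₂]`. -/
def InRect (a b x : ℤ × ℤ) : Prop := a.1 ≤ x.1 ∧ x.1 ≤ b.1 ∧ a.2 ≤ x.2 ∧ x.2 ≤ b.2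

/-- `H(a,b)`: an open left-right crossing of the rectangle `[1,a] × [1,b]`. -/
def Crossing (a b : ℕ) (η : Config) : Prop :=
  ∃ n f, OpenPath η n f ∧ (∀ i ≤ n, InRect (1, 1) ((a : ℤ), (b : ℤ)) (f i)) ∧
    (f 0).1 = 1 ∧ (f n).1 = (a : ℤ)

/-- Membership in the box `[−m, m]²`. -/
def InBox (m : ℕ) (x : ℤ × ℤ) : Prop := |x.1| ≤ (m : ℤ) ∧ |x.2| ≤ (m : ℤ)

/-- `f 0, …, f n` is a closed nearest-neighbor loop. -/
def IsLoop (f : ℕ → ℤ × ℤ) (n : ℕ) : Prop := (∀ i < n, Adj (f i) (f (i + 1))) ∧ f n = f 0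

/-- The loop `f 0, …, f n` surrounds the box `[−m,m]²`: every nearest-neighbor path started
in the box that leaves every box must meet the loop. -/
def Surrounds (f : ℕ → ℤ × ℤ) (n m : ℕ) : Prop :=
  ∀ g : ℕ → ℤ × ℤ, InBox m (g 0) → (∀ i, Adj (g i) (g (i + 1))) →
    (∀ N : ℕ, ∃ i, ¬ InBox N (g i)) → ∃ i j, j ≤ n ∧ g i = f j

/-- `Cir(m,n)`: there is an open circuit surrounding `[−m,m]²` contained in `[−n,n]²`. -/
def Circuit (m n : ℕ) (η : Config) : Prop :=
  ∃ k f, IsLoop f k ∧ (∀ j ≤ k, InBox n (f j) ∧ η (f j) = true) ∧ Surrounds f k m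

/-- An increasing (monotone) event of configurations. -/
def IncreasingEvent (A : Set Config) : Prop :=
  ∀ η η' : Config, (∀ x, η x = true → η' x = true) → η ∈ A → η' ∈ A

/-- Positive association (FKG inequality) for a measure on configurations. -/
def PositivelyAssociated (μ : MeasureTheory.Measure Config) : Prop :=
  ∀ A B : Set Config, MeasurableSet A → MeasurableSet B →
    IncreasingEvent A → IncreasingEvent B → μ A * μ B ≤ μ (A ∩ B)

/-- The four nearest neighbors of a site. -/
def nbrs (x : ℤ × ℤ) : List (ℤ × ℤ) :=
  [(x.1 + 1, x.2), (x.1 - 1, x.2), (x.1, x.2 + 1), (x.1, x.2 - 1)]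

/-- The number of neighbors of `x` with opinion 1 in the configuration `η`. -/
def onesCount (η : Config) (x : ℤ × ℤ) : ℕ := (nbrs x).countP (fun y => η y)

/-- The majority update rule at `x`: adopt the majority opinion among the four neighbors,
keeping the current opinion in case of a tie. -/
def majUpdate (η : Config) (x : ℤ × ℤ) : Bool :=
  if 3 ≤ onesCount η x then true else if onesCount η x ≤ 1 then false else η x

/-- `F : ℝ → Config` is a trajectory of majority dynamics with clock ring times `R x` at each
site `x`: the opinion of `x` is constant on time intervals containing no ring of `x`, and at
each ring time the opinion of `x` becomes the majority opinion of the configuration just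
before the ring. -/
def IsMajorityTrajectory (R : (ℤ × ℤ) → Set ℝ) (F : ℝ → Config) : Prop :=
  (∀ x : ℤ × ℤ, ∀ s₁ s₂ : ℝ, 0 ≤ s₁ → s₁ ≤ s₂ →
    (∀ r ∈ R x, r ≤ s₁ ∨ s₂ < r) → F s₂ x = F s₁ x) ∧
  (∀ x : ℤ × ℤ, ∀ r ∈ R x, 0 < r →
    ∃ ε > (0 : ℝ), ∀ s : ℝ, r - ε < s → s < r → F r x = majUpdate (F s) x)

open Set

private lemma adj_symm' {x y : ℤ × ℤ} (h : Adj x y) : Adj y x := by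
  unfold Adj at *; omega

private lemma mem_nbrs_of_adj {y x : ℤ × ℤ} (h : Adj y x) : y ∈ nbrs x := by
  obtain ⟨y1, y2⟩ := y; obtain ⟨x1, x2⟩ := x
  simp only [Adj] at h
  simp only [nbrs, List.mem_cons, List.not_mem_nil, or_false, Prod.mk.injEq]
  omega

private lemma adj_of_mem_nbrs {y x : ℤ × ℤ} (h : y ∈ nbrs x) : Adj y x := by
  obtain ⟨x1, x2⟩ := x
  simp only [nbrs, List.mem_cons, List.not_mem_nil, or_false] at h
  rcases h with rfl | rfl | rfl | rfl <;> simp only [Adj] <;> omega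

private lemma two_le_countP {α : Type*} {p : α → Bool} {a b : α} :
    ∀ {l : List α}, a ∈ l → b ∈ l → a ≠ b → p a = true → p b = true → 2 ≤ l.countP p := by
  intro l
  induction l with
  | nil => intro h; simp at h
  | cons c l ih =>
    intro ha hb hab hpa hpb
    rw [List.countP_cons]
    rcases List.mem_cons.1 ha with h | ha'
    · subst h
      have hbl : b ∈ l := by
        rcases List.mem_cons.1 hb with h | h
        · exact absurd h.symm hab
        · exact h
      have h1 : 0 < l.countP p := List.countP_pos_iff.2 ⟨b, hbl, hpb⟩
      rw [if_pos hpa]; omega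
    · rcases List.mem_cons.1 hb with h | hbl
      · subst h
        have h1 : 0 < l.countP p := List.countP_pos_iff.2 ⟨a, ha', hpa⟩
        rw [if_pos hpb]; omega
      · have := ih ha' hbl hab hpa hpb
        split <;> omega

private lemma onesCount_congr {η η' : Config} {x : ℤ × ℤ}
    (h : ∀ y ∈ nbrs x, η y = η' y) : onesCount η x = onesCount η' x := by
  unfold onesCount
  apply List.countP_congr
  intro y hy
  rw [h y hy]

private lemma majUpdate_true_of_three {η : Config} {x : ℤ × ℤ} (h : 3 ≤ onesCount η x) :
    majUpdate η x = true := by simp [majUpdate, h]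

private lemma majUpdate_true_of_two {η : Config} {x : ℤ × ℤ} (h : 2 ≤ onesCount η x)
    (hx : η x = true) : majUpdate η x = true := by
  by_cases h3 : 3 ≤ onesCount η x
  · simp [majUpdate, h3]
  · have h1 : ¬ onesCount η x ≤ 1 := by omega
    simp [majUpdate, h3, h1, hx]


/-- The enhancement path argument: let `x₀, x₁, …` be a nearest-neighbor path decomposing into
finite blocks of sites that are open at time 0 and whose endpoint sites have no clock ring in
`[0,t]`, separated by single "enhanced" sites whose clock rings in `(0,t)`, whose four
neighbors have no ring in `[0,t]`, and which have at least three neighbors open at time `0`.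
Then from the first enhanced index `j₀` onwards, every site of the path is open at time `t`. -/
theorem enhancement_path_open (R : (ℤ × ℤ) → Set ℝ) (F : ℝ → Config)
    (hTraj : IsMajorityTrajectory R F)
    (hLocFin : ∀ x : ℤ × ℤ, ∀ s : ℝ, (R x ∩ Set.Icc 0 s).Finite)
    (t : ℝ) (ht : 0 < t)
    (x : ℕ → ℤ × ℤ) (hpath : ∀ j, Adj (x j) (x (j + 1))) (hinj : Function.Injective x)
    (enh : ℕ → Prop)
    -- enhanced sites are isolated along the path (blocks separate consecutive enhanced sites)
    (hiso : ∀ j, enh j → ¬ enh (j + 1))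
    -- there are infinitely many enhanced sites, so every block is finite
    (hinfinite : ∀ j, ∃ j', j < j' ∧ enh j')
    -- within each block every site has value 1 at time 0
    (hblock : ∀ j, ¬ enh j → F 0 (x j) = true)
    -- the first and last sites of each block have no clock ring in [0,t]
    (hends : ∀ j, ¬ enh j → ((j = 0 ∨ enh (j - 1)) ∨ enh (j + 1)) →
      ∀ r ∈ R (x j), r ∉ Set.Icc 0 t)
    -- each enhanced site's clock rings before t …
    (hring : ∀ j, enh j → ∃ r ∈ R (x j), 0 < r ∧ r < t)
    -- … while all four of its neighbors' clocks ring only after t …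
    (hquiet : ∀ j, enh j → ∀ y, Adj y (x j) → ∀ r ∈ R y, r ∉ Set.Icc 0 t)
    -- … and at least three of its neighbors have value 1 at time 0
    (hmaj : ∀ j, enh j → 3 ≤ onesCount (F 0) (x j))
    (j₀ : ℕ) (hj₀ : enh j₀) :
    ∀ j, j₀ ≤ j → F t (x j) = true := by
  classical
  have hconst0 : ∀ (y : ℤ × ℤ), (∀ r ∈ R y, r ∉ Set.Icc 0 t) → ∀ s : ℝ, 0 ≤ s → s ≤ t →
      F s y = F 0 y := by
    intro y hy s hs0 hst
    apply hTraj.1 y 0 s le_rfl hs0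
    intro r hr
    have h := hy r hr
    rw [Set.mem_Icc] at h
    push_neg at h
    by_cases h0 : 0 ≤ r
    · exact Or.inr (lt_of_le_of_lt hst (h h0))
    · exact Or.inl (le_of_lt (lt_of_not_ge h0))
  -- enhanced sites are open at time t
  have henh : ∀ j, enh j → F t (x j) = true := by
    intro j hj
    obtain ⟨r0, hr0R, hr0pos, hr0lt⟩ := hring j hj
    have hUfin : (R (x j) ∩ Set.Ioc 0 t).Finite :=
      (hLocFin (x j) t).subset (by rintro r ⟨h1, h2⟩; exact ⟨h1, le_of_lt h2.1, h2.2⟩)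
    have hUne : hUfin.toFinset.Nonempty :=
      ⟨r0, hUfin.mem_toFinset.2 ⟨hr0R, hr0pos, le_of_lt hr0lt⟩⟩
    set r := hUfin.toFinset.max' hUne with hrdef
    have hrmem : r ∈ R (x j) ∩ Set.Ioc 0 t := hUfin.mem_toFinset.1 (hUfin.toFinset.max'_mem hUne)
    have hrmax : ∀ u ∈ R (x j) ∩ Set.Ioc 0 t, u ≤ r :=
      fun u hu => hUfin.toFinset.le_max' u (hUfin.mem_toFinset.2 hu)
    have hrR : r ∈ R (x j) := hrmem.1
    have hrpos : 0 < r := hrmem.2.1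
    have hrle : r ≤ t := hrmem.2.2
    have h1 : F t (x j) = F r (x j) := by
      apply hTraj.1 (x j) r t (le_of_lt hrpos) hrle
      intro r' hr'
      by_cases h : r' ≤ 0
      · exact Or.inl (h.trans (le_of_lt hrpos))
      · by_cases h2 : r' ≤ t
        · exact Or.inl (hrmax r' ⟨hr', lt_of_not_ge h, h2⟩)
        · exact Or.inr (lt_of_not_ge h2)
    rw [h1]
    obtain ⟨ε, hε, hupd⟩ := hTraj.2 (x j) r hrR hrpos
    set s := max (r/2) (r - ε/2) with hs
    have hslt : s < r := by
      apply max_lt <;> linarith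
    have hsgt : r - ε < s := lt_of_lt_of_le (by linarith) (le_max_right _ _)
    have hspos : 0 < s := lt_of_lt_of_le (by linarith) (le_max_left _ _)
    rw [hupd s hsgt hslt]
    apply majUpdate_true_of_three
    have heq : onesCount (F s) (x j) = onesCount (F 0) (x j) := by
      apply onesCount_congr
      intro y hy
      exact hconst0 y (hquiet j hj y (adj_of_mem_nbrs hy)) s (le_of_lt hspos)
        ((le_of_lt hslt).trans hrle)
    rw [heq]
    exact hmaj j hj
  intro j hj0le
  by_cases hje : enh j
  · exact henh j hje
  · set a := Nat.findGreatest enh j with ha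
    have haenh : enh a := Nat.findGreatest_spec hj0le hj₀
    have halej : a ≤ j := Nat.findGreatest_le j
    have haltj : a < j := lt_of_le_of_ne halej (fun h => hje (h ▸ haenh))
    have hamax : ∀ k, a < k → k ≤ j → ¬ enh k := fun k h1 h2 =>
      Nat.findGreatest_is_greatest h1 h2
    have hb := Nat.find_spec (hinfinite j)
    set b := Nat.find (hinfinite j) with hbdef
    have hjb : j < b := hb.1
    have hbenh : enh b := hb.2
    have hbmin : ∀ k, j < k → k < b → ¬ enh k := fun k h1 h2 hk =>
      Nat.find_min (hinfinite j) h2 ⟨h1, hk⟩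
    have hblocknot : ∀ k, a < k → k < b → ¬ enh k := by
      intro k h1 h2
      rcases le_or_gt k j with h | h
      · exact hamax k h1 h
      · exact hbmin k h h2
    have hb1 : 1 ≤ b := by omega
    set T : Set ℝ := ⋃ k ∈ Finset.Ioo a b, (R (x k) ∩ Set.Icc 0 t) with hT
    have hTfin : T.Finite :=
      Set.Finite.biUnion (Finset.Ioo a b).finite_toSet (fun k _ => hLocFin (x k) t)
    have hmemT : ∀ k, a < k → k < b → ∀ r ∈ R (x k), 0 ≤ r → r ≤ t → r ∈ T := by
      intro k h1 h2 r hr h0 hts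
      exact Set.mem_biUnion (Finset.mem_Ioo.2 ⟨h1, h2⟩) ⟨hr, h0, hts⟩
    have hstep : ∀ (u s : ℝ), 0 ≤ u → u ≤ s → s ≤ t →
        (T ∩ Set.Ioc u s = ∅) → ∀ k, a < k → k < b → F s (x k) = F u (x k) := by
      intro u s hu hus hst hempty k hk1 hk2
      apply hTraj.1 (x k) u s hu hus
      intro r hr
      by_cases h0 : r ≤ u
      · exact Or.inl h0
      · right
        by_cases h2 : r ≤ s
        · exfalso
          have hrT : r ∈ T :=
            hmemT k hk1 hk2 r hr (hu.trans (le_of_lt (lt_of_not_ge h0))) (h2.trans hst)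
          have : r ∈ T ∩ Set.Ioc u s := ⟨hrT, lt_of_not_ge h0, h2⟩
          rw [hempty] at this
          exact this
        · exact lt_of_not_ge h2
    have key : ∀ n : ℕ, ∀ s : ℝ, 0 ≤ s → s ≤ t → (T ∩ Set.Ioc 0 s).ncard ≤ n →
        ∀ k, a < k → k < b → F s (x k) = true := by
      intro n
      induction n with
      | zero =>
        intro s hs0 hst hcard k hk1 hk2
        have hSfin : (T ∩ Set.Ioc 0 s).Finite := hTfin.inter_of_left _
        have hSempty : T ∩ Set.Ioc 0 s = ∅ :=
          (Set.ncard_eq_zero hSfin).1 (Nat.le_zero.1 hcard)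
        rw [hstep 0 s le_rfl hs0 hst hSempty k hk1 hk2]
        exact hblock k (hblocknot k hk1 hk2)
      | succ n ih =>
        intro s hs0 hst hcard k hk1 hk2
        set S := T ∩ Set.Ioc 0 s with hSdef
        have hSfin : S.Finite := hTfin.inter_of_left _
        rcases Set.eq_empty_or_nonempty S with hSe | hSe
        · rw [hstep 0 s le_rfl hs0 hst hSe k hk1 hk2]
          exact hblock k (hblocknot k hk1 hk2)
        · have hSne : hSfin.toFinset.Nonempty := by
            rwa [Set.Finite.toFinset_nonempty]
          set r := hSfin.toFinset.max' hSne with hrdef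
          have hrS : r ∈ S := hSfin.mem_toFinset.1 (Finset.max'_mem _ _)
          have hrmax : ∀ u ∈ S, u ≤ r := fun u hu =>
            Finset.le_max' _ u (hSfin.mem_toFinset.2 hu)
          have hrpos : 0 < r := hrS.2.1
          have hrles : r ≤ s := hrS.2.2
          have hrlet : r ≤ t := hrles.trans hst
          set M := insert (0:ℝ) (hSfin.toFinset.erase r) with hM
          have hMne : M.Nonempty := Finset.insert_nonempty _ _
          set m := M.max' hMne with hmdef
          have hm0 : 0 ≤ m := Finset.le_max' _ 0 (Finset.mem_insert_self _ _)
          have hmmem : m ∈ M := Finset.max'_mem M hMne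
          have hmlt : m < r := by
            rcases Finset.mem_insert.1 hmmem with h | h
            · rw [h]; exact hrpos
            · exact lt_of_le_of_ne
                (hrmax m (hSfin.mem_toFinset.1 (Finset.mem_of_mem_erase h)))
                (Finset.ne_of_mem_erase h)
          have hSlem : ∀ u ∈ S, u ≠ r → u ≤ m := fun u hu hne =>
            Finset.le_max' _ u
              (Finset.mem_insert_of_mem (Finset.mem_erase.2 ⟨hne, hSfin.mem_toFinset.2 hu⟩))
          have hsub : T ∩ Set.Ioc 0 m ⊆ S \ {r} := by
            rintro u ⟨huT, hu0, hum⟩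
            refine ⟨⟨huT, hu0, (hum.trans (le_of_lt hmlt)).trans hrles⟩, ?_⟩
            intro h
            rw [Set.mem_singleton_iff] at h
            rw [h] at hum
            linarith
          have hcard_m : (T ∩ Set.Ioc 0 m).ncard ≤ n := by
            have h1 : (S \ {r}).ncard < S.ncard :=
              Set.ncard_diff_singleton_lt_of_mem hrS hSfin
            have h2 : (T ∩ Set.Ioc 0 m).ncard ≤ (S \ {r}).ncard :=
              Set.ncard_le_ncard hsub (hSfin.diff)
            omega
          have hIHm : ∀ k, a < k → k < b → F m (x k) = true :=
            ih m hm0 (le_of_lt (hmlt.trans_le hrlet)) hcard_m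
          have hmid : ∀ u, m ≤ u → u < r → ∀ k, a < k → k < b → F u (x k) = true := by
            intro u hmu hur k' hk1' hk2'
            have hempty : T ∩ Set.Ioc m u = ∅ := by
              ext v
              simp only [Set.mem_inter_iff, Set.mem_Ioc, Set.mem_empty_iff_false, iff_false,
                not_and]
              intro hvT hv1 hv2
              have hvS : v ∈ S :=
                ⟨hvT, lt_of_le_of_lt hm0 hv1, ((hv2.trans (le_of_lt hur)).trans hrles)⟩
              have hvne : v ≠ r := by
                intro h; rw [h] at hv2; linarith
              have := hSlem v hvS hvne
              linarith
            rw [hstep m u hm0 hmu ((le_of_lt (hur.trans_le hrlet))) hempty k' hk1' hk2']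
            exact hIHm k' hk1' hk2'
          have hatr : ∀ k, a < k → k < b → F r (x k) = true := by
            intro k' hk1' hk2'
            by_cases hkr : r ∈ R (x k')
            · have hkne1 : k' ≠ a + 1 := by
                intro h
                have hne : enh (k' - 1) := by rw [h]; simpa using haenh
                exact hends k' (hblocknot k' hk1' hk2') (Or.inl (Or.inr hne)) r hkr
                  (Set.mem_Icc.2 ⟨le_of_lt hrpos, hrlet⟩)
              have hkne2 : k' ≠ b - 1 := by
                intro h
                have hne : enh (k' + 1) := by
                  rw [h, show b - 1 + 1 = b from by omega]; exact hbenh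
                exact hends k' (hblocknot k' hk1' hk2') (Or.inr hne) r hkr
                  (Set.mem_Icc.2 ⟨le_of_lt hrpos, hrlet⟩)
              have hk1'' : a + 1 < k' := by omega
              have hk2'' : k' < b - 1 := by omega
              obtain ⟨ε, hε, hupd⟩ := hTraj.2 (x k') r hkr hrpos
              set s' := max m (r - ε/2) with hs'
              have hs'lt : s' < r := max_lt hmlt (by linarith)
              have hs'gt : r - ε < s' := lt_of_lt_of_le (by linarith) (le_max_right _ _)
              have hs'ge : m ≤ s' := le_max_left _ _
              rw [hupd s' hs'gt hs'lt]
              apply majUpdate_true_of_two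
              · have h1 : F s' (x (k'-1)) = true :=
                  hmid s' hs'ge hs'lt (k'-1) (by omega) (by omega)
                have h2 : F s' (x (k'+1)) = true :=
                  hmid s' hs'ge hs'lt (k'+1) (by omega) (by omega)
                have hm1 : x (k'-1) ∈ nbrs (x k') := by
                  have hadj := hpath (k'-1)
                  rw [show k' - 1 + 1 = k' from by omega] at hadj
                  exact mem_nbrs_of_adj hadj
                have hm2 : x (k'+1) ∈ nbrs (x k') := mem_nbrs_of_adj (adj_symm' (hpath k'))
                have hnexx : x (k'-1) ≠ x (k'+1) := by
                  intro h
                  have := hinj h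
                  omega
                exact two_le_countP hm1 hm2 hnexx h1 h2
              · exact hmid s' hs'ge hs'lt k' hk1' hk2'
            · have heq : F r (x k') = F m (x k') := by
                apply hTraj.1 (x k') m r hm0 (le_of_lt hmlt)
                intro r' hr'
                by_cases h0 : r' ≤ m
                · exact Or.inl h0
                · right
                  by_cases h2 : r' ≤ r
                  · exfalso
                    have hr'T : r' ∈ T := hmemT k' hk1' hk2' r' hr'
                      (hm0.trans (le_of_lt (lt_of_not_ge h0))) (h2.trans hrlet)
                    have hr'S : r' ∈ S :=
                      ⟨hr'T, hm0.trans_lt (lt_of_not_ge h0), h2.trans hrles⟩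
                    have hne : r' ≠ r := fun h => hkr (h ▸ hr')
                    exact h0 (hSlem r' hr'S hne)
                  · exact lt_of_not_ge h2
              rw [heq]
              exact hIHm k' hk1' hk2'
          have hfin : F s (x k) = F r (x k) := by
            apply hTraj.1 (x k) r s (le_of_lt hrpos) hrles
            intro r' hr'
            by_cases h0 : r' ≤ r
            · exact Or.inl h0
            · right
              by_cases h2 : r' ≤ s
              · exfalso
                have hgt : r < r' := lt_of_not_ge h0
                have hr'S : r' ∈ S :=
                  ⟨hmemT k hk1 hk2 r' hr' (by linarith) (h2.trans hst), by linarith, h2⟩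
                exact h0 (hrmax r' hr'S)
              · exact lt_of_not_ge h2
          rw [hfin]
          exact hatr k hk1 hk2
    exact key (T ∩ Set.Ioc 0 t).ncard t (le_of_lt ht) le_rfl le_rfl j haltj hjb
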